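/- arXiv:2510.23912 — 6 statements merged into one kernel-verified Lean document; each statement's English description precedes it below -/
import Mathlib

section
/- Consider an L-layer decoder-only transformer without normalization whose layer i (1 ≤ i ≤ L) maps X ↦ φ((X + S_c(X, W_Q^i, W_K^i, W_V^i)·W_O^i)·W_up^i)·W_down^i, with input X_0 ∈ ℝ^{n×d} whose row t equals E(x_t) plus row t of E_P for a token sequence x ∈ (Fin V)^n, and output X_L·W_LM. If every W_Q^i is invertible, then there exist a modified embedding Ẽ : Fin V → ℝ^d, modified positional embeddings Ẽ_P ∈ ℝ^{n×d}, a modified LM head W̃_LM ∈ ℝ^{d×V}, and modified per-layer weights (W̃_K^i, W̃_V^i, W̃_O^i, W̃_up^i, W̃_down^i) for 1 ≤ i ≤ L, such that the transformer built from these modified weights with every query weight equal to the identity matrix I_d produces the same output matrix X_L·W_LM as the original transformer on every token sequence x ∈ (Fin V)^n. In particular one may take Θ_i = W_Q^i for 1 ≤ i ≤ L, Θ_{L+1} = I_d, Ẽ = E·Θ_1, Ẽ_P = E_P·Θ_1, W̃_K^i = Θ_i⁻¹W_K^i, W̃_V^i = Θ_i⁻¹W_V^i, W̃_O^i = W_O^i·Θ_i,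 W̃_up^i = Θ_i⁻¹W_up^i, W̃_down^i = W_down^i·Θ_{i+1}, W̃_LM = W_LM. -/
open scoped Matrix

/-- Causal softmax: `CS(A)_{pq} = exp(A_{pq}) / Σ_{r ≤ p} exp(A_{pr})` if `q ≤ p`, else `0`. -/
noncomputable def causalSoftmax {n : ℕ} (A : Matrix (Fin n) (Fin n) ℝ) :
    Matrix (Fin n) (Fin n) ℝ :=
  Matrix.of fun p q =>
    if q ≤ p then
      Real.exp (A p q) / ∑ r ∈ Finset.univ.filter (fun r => r ≤ p), Real.exp (A p r)
    else 0

/-- The `i`-th block of `d_k` consecutive columns (columns are indexed by `Fin h × Fin d_k`). -/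
def blockCol {n h dk : ℕ} (i : Fin h) (M : Matrix (Fin n) (Fin h × Fin dk) ℝ) :
    Matrix (Fin n) (Fin dk) ℝ :=
  Matrix.of fun p j => M p (i, j)

/-- Multi-head causal self-attention: per head `i`,
`CS((1/√d_k)(XW_Q)_i (XW_K)_iᵀ) (XW_V)_i`, concatenated over heads. -/
noncomputable def Sc {n h dk : ℕ} (X : Matrix (Fin n) (Fin h × Fin dk) ℝ)
    (WQ WK WV : Matrix (Fin h × Fin dk) (Fin h × Fin dk) ℝ) :
    Matrix (Fin n) (Fin h × Fin dk) ℝ :=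
  Matrix.of fun p c =>
    (causalSoftmax ((1 / Real.sqrt dk) •
        (blockCol c.1 (X * WQ) * (blockCol c.1 (X * WK))ᵀ)) *
      blockCol c.1 (X * WV)) p c.2


/-- One transformer layer without normalization, with a skip connection only around the
attention: `X ↦ φ((X + S_c(X, W_Q, W_K, W_V) · W_O) · W_up) · W_down`. -/
noncomputable def layerA {n h dk m : ℕ} (φ : ℝ → ℝ)
    (WQ WK WV WO : Matrix (Fin h × Fin dk) (Fin h × Fin dk) ℝ)
    (Wup : Matrix (Fin h × Fin dk) (Fin m) ℝ)
    (Wdown : Matrix (Fin m) (Fin h × Fin dk) ℝ)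
    (X : Matrix (Fin n) (Fin h × Fin dk) ℝ) : Matrix (Fin n) (Fin h × Fin dk) ℝ :=
  (((X + Sc X WQ WK WV * WO) * Wup).map φ) * Wdown

/-- The `L`-layer forward pass (layer `0` applied first). -/
noncomputable def forwardA {n h dk m L : ℕ} (φ : ℝ → ℝ)
    (WQ WK WV WO : Fin L → Matrix (Fin h × Fin dk) (Fin h × Fin dk) ℝ)
    (Wup : Fin L → Matrix (Fin h × Fin dk) (Fin m) ℝ)
    (Wdown : Fin L → Matrix (Fin m) (Fin h × Fin dk) ℝ)
    (X0 : Matrix (Fin n) (Fin h × Fin dk) ℝ) : Matrix (Fin n) (Fin h × Fin dk) ℝ :=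
  (List.finRange L).foldl
    (fun X i => layerA φ (WQ i) (WK i) (WV i) (WO i) (Wup i) (Wdown i) X) X0


private lemma foldl_rel_aux : ∀ (L : ℕ) {α : Type} (f g : Fin L → α → α)
    (R : Fin (L+1) → α → α → Prop)
    (hstep : ∀ (i : Fin L) a b, R i.castSucc a b → R i.succ (f i a) (g i b))
    (a b : α), R 0 a b →
    R (Fin.last L)
      ((List.finRange L).foldl (fun x i => f i x) a)
      ((List.finRange L).foldl (fun x i => g i x) b) := by
  intro L
  induction L with
  | zero =>
    intro α f g R hstep a b hab
    simpa [List.finRange] using hab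
  | succ L ih =>
    intro α f g R hstep a b hab
    rw [List.finRange_succ]
    simp only [List.foldl_cons, List.foldl_map]
    have h0 : R (0 : Fin (L+1)).succ (f 0 a) (g 0 b) := by
      apply hstep
      simpa using hab
    have := ih (fun i x => f i.succ x) (fun i x => g i.succ x)
      (fun i => R i.succ)
      (fun i a b hr => by
        have := hstep i.succ a b (by rwa [← Fin.succ_castSucc])
        exact this)
      (f 0 a) (g 0 b) h0
    simpa [Fin.succ_last] using this

private lemma Sc_conj {n h dk : ℕ} (Y : Matrix (Fin n) (Fin h × Fin dk) ℝ)
    (Q K Wv : Matrix (Fin h × Fin dk) (Fin h × Fin dk) ℝ) (hQ : IsUnit Q.det) :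
    Sc (Y * Q) 1 (Q⁻¹ * K) (Q⁻¹ * Wv) = Sc Y Q K Wv := by
  have hK : Y * Q * (Q⁻¹ * K) = Y * K := by
    rw [Matrix.mul_assoc, Matrix.mul_nonsing_inv_cancel_left _ _ hQ]
  have hV : Y * Q * (Q⁻¹ * Wv) = Y * Wv := by
    rw [Matrix.mul_assoc, Matrix.mul_nonsing_inv_cancel_left _ _ hQ]
  unfold Sc
  rw [Matrix.mul_one, hK, hV]

private lemma layerA_conj {n h dk m : ℕ} (φ : ℝ → ℝ)
    (Q K Wv O Θ : Matrix (Fin h × Fin dk) (Fin h × Fin dk) ℝ)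
    (U : Matrix (Fin h × Fin dk) (Fin m) ℝ)
    (D : Matrix (Fin m) (Fin h × Fin dk) ℝ)
    (hQ : IsUnit Q.det) (Y : Matrix (Fin n) (Fin h × Fin dk) ℝ) :
    layerA φ 1 (Q⁻¹ * K) (Q⁻¹ * Wv) (O * Q) (Q⁻¹ * U) (D * Θ) (Y * Q) =
      layerA φ Q K Wv O U D Y * Θ := by
  unfold layerA
  rw [Sc_conj Y Q K Wv hQ]
  have h1 : Y * Q + Sc Y Q K Wv * (O * Q) = (Y + Sc Y Q K Wv * O) * Q := by
    rw [Matrix.add_mul, Matrix.mul_assoc]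
  rw [h1, Matrix.mul_assoc, Matrix.mul_nonsing_inv_cancel_left _ _ hQ,
    ← Matrix.mul_assoc]

/-- **Attention-Skip-Only Query Weight Elimination.** If every `W_Q^i` is invertible,
there exist modified embeddings, positional embeddings, LM head and per-layer weights such
that the transformer with every query weight equal to the identity produces the same output
`X_L · W_LM` on every token sequence. -/
theorem attention_skip_only_query_elimination {n h dk m V L : ℕ} (φ : ℝ → ℝ)
    (E : Fin V → Fin h × Fin dk → ℝ)
    (EP : Matrix (Fin n) (Fin h × Fin dk) ℝ)
    (WLM : Matrix (Fin h × Fin dk) (Fin V) ℝ)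
    (WQ WK WV WO : Fin L → Matrix (Fin h × Fin dk) (Fin h × Fin dk) ℝ)
    (Wup : Fin L → Matrix (Fin h × Fin dk) (Fin m) ℝ)
    (Wdown : Fin L → Matrix (Fin m) (Fin h × Fin dk) ℝ)
    (hWQ : ∀ i, IsUnit (WQ i).det) :
    ∃ (Etil : Fin V → Fin h × Fin dk → ℝ)
      (EPtil : Matrix (Fin n) (Fin h × Fin dk) ℝ)
      (WLMtil : Matrix (Fin h × Fin dk) (Fin V) ℝ)
      (WKtil WVtil WOtil : Fin L → Matrix (Fin h × Fin dk) (Fin h × Fin dk) ℝ)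
      (Wuptil : Fin L → Matrix (Fin h × Fin dk) (Fin m) ℝ)
      (Wdowntil : Fin L → Matrix (Fin m) (Fin h × Fin dk) ℝ),
      ∀ x : Fin n → Fin V,
        forwardA φ (fun _ => (1 : Matrix (Fin h × Fin dk) (Fin h × Fin dk) ℝ))
            WKtil WVtil WOtil Wuptil Wdowntil
            (Matrix.of fun t c => Etil (x t) c + EPtil t c) * WLMtil =
          forwardA φ WQ WK WV WO Wup Wdown
            (Matrix.of fun t c => E (x t) c + EP t c) * WLM := by
  
  classical
  set Θ : Fin (L+1) → Matrix (Fin h × Fin dk) (Fin h × Fin dk) ℝ :=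
    Fin.snoc WQ 1 with hΘ
  refine ⟨fun v => Matrix.vecMul (E v) (Θ 0), EP * Θ 0, WLM,
    fun i => (WQ i)⁻¹ * WK i, fun i => (WQ i)⁻¹ * WV i, fun i => WO i * WQ i,
    fun i => (WQ i)⁻¹ * Wup i, fun i => Wdown i * Θ i.succ, fun x => ?_⟩
  have hX0 : (Matrix.of fun t c => Matrix.vecMul (E (x t)) (Θ 0) c + (EP * Θ 0) t c) =
      (Matrix.of fun t c => E (x t) c + EP t c) * Θ 0 := by
    ext t c
    simp [Matrix.mul_apply, Matrix.vecMul, dotProduct, add_mul,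
      Finset.sum_add_distrib]
  rw [hX0]
  unfold forwardA
  have key := foldl_rel_aux L
    (fun i X => layerA φ 1 ((WQ i)⁻¹ * WK i) ((WQ i)⁻¹ * WV i) (WO i * WQ i)
      ((WQ i)⁻¹ * Wup i) (Wdown i * Θ i.succ) X)
    (fun i X => layerA φ (WQ i) (WK i) (WV i) (WO i) (Wup i) (Wdown i) X)
    (fun j A B => A = B * Θ j)
    (fun i a b hr => by
      rw [hr]
      have hc : Θ i.castSucc = WQ i := by simp [hΘ, Fin.snoc_castSucc]
      rw [hc]
      exact layerA_conj φ (WQ i) (WK i) (WV i) (WO i) (Θ i.succ)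
        (Wup i) (Wdown i) (hWQ i) b)
    ((Matrix.of fun t c => E (x t) c + EP t c) * Θ 0)
    (Matrix.of fun t c => E (x t) c + EP t c) rfl
  rw [key]
  have hlast : Θ (Fin.last L) = 1 := by simp [hΘ]
  rw [hlast, Matrix.mul_one]
end

section
/- Let Block : ℝ^{n×d} → ℝ^{n×d} be a transformer block without layer normalization with skip connections around both its attention and MLP sublayers: Block(X) = Y + φ(Y·W_up)·W_down where Y = X + S_c(X, W_Q, W_K, W_V)·W_O, and suppose W_Q ∈ GL(d). Set Θ = W_Q, W̃_K = Θ⁻¹W_K, W̃_V = Θ⁻¹W_V, W̃_O = W_O·Θ, W̃_up = Θ⁻¹W_up, W̃_down = W_down·Θ, and let B̃ be the block with the same form built from query weight I_d and these weights. Then Block(X)·Θ = B̃(X·Θ) for all X ∈ ℝ^{n×d}; that is, Block is conjugate (by right multiplication by Θ) to a block whose query weight is the identity. -/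
open scoped Matrix

/-- A transformer block without layer normalization, with skip connections around both the
attention and the MLP: `Block(X) = Y + φ(Y · W_up) · W_down` where
`Y = X + S_c(X, W_Q, W_K, W_V) · W_O`. -/
noncomputable def blockFn {n h dk m : ℕ} (φ : ℝ → ℝ)
    (WQ WK WV WO : Matrix (Fin h × Fin dk) (Fin h × Fin dk) ℝ)
    (Wup : Matrix (Fin h × Fin dk) (Fin m) ℝ)
    (Wdown : Matrix (Fin m) (Fin h × Fin dk) ℝ)
    (X : Matrix (Fin n) (Fin h × Fin dk) ℝ) : Matrix (Fin n) (Fin h × Fin dk) ℝ :=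
  let Y := X + Sc X WQ WK WV * WO
  Y + ((Y * Wup).map φ) * Wdown

/-- **Blocks are conjugate to reduced blocks.** With `Θ = W_Q`,
`Block(X) · Θ = B̃(X · Θ)` where `B̃` is the block with query weight `I` and weights
`W̃_K = Θ⁻¹W_K`, `W̃_V = Θ⁻¹W_V`, `W̃_O = W_O Θ`, `W̃_up = Θ⁻¹W_up`, `W̃_down = W_down Θ`. -/
theorem block_conjugate_to_reduced {n h dk m : ℕ} (φ : ℝ → ℝ)
    (WQ WK WV WO : Matrix (Fin h × Fin dk) (Fin h × Fin dk) ℝ)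
    (Wup : Matrix (Fin h × Fin dk) (Fin m) ℝ)
    (Wdown : Matrix (Fin m) (Fin h × Fin dk) ℝ)
    (hWQ : IsUnit WQ.det) :
    ∀ X : Matrix (Fin n) (Fin h × Fin dk) ℝ,
      blockFn φ WQ WK WV WO Wup Wdown X * WQ =
        blockFn φ (1 : Matrix (Fin h × Fin dk) (Fin h × Fin dk) ℝ)
          (WQ⁻¹ * WK) (WQ⁻¹ * WV) (WO * WQ) (WQ⁻¹ * Wup) (Wdown * WQ) (X * WQ) := by
  intro X
  have hinv : WQ * WQ⁻¹ = 1 := Matrix.mul_nonsing_inv WQ hWQ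
  have hK : X * WQ * (WQ⁻¹ * WK) = X * WK := by
    rw [Matrix.mul_assoc X, ← Matrix.mul_assoc WQ, hinv, Matrix.one_mul]
  have hV : X * WQ * (WQ⁻¹ * WV) = X * WV := by
    rw [Matrix.mul_assoc X, ← Matrix.mul_assoc WQ, hinv, Matrix.one_mul]
  have hS : Sc (X * WQ) 1 (WQ⁻¹ * WK) (WQ⁻¹ * WV) = Sc X WQ WK WV := by
    simp only [Sc, Matrix.mul_one, hK, hV]
  simp only [blockFn, hS]
  have hY : (X + Sc X WQ WK WV * WO) * WQ
      = X * WQ + Sc X WQ WK WV * (WO * WQ) := by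
    rw [Matrix.add_mul, Matrix.mul_assoc]
  rw [← hY]
  set Y := X + Sc X WQ WK WV * WO with hYdef
  have hup : Y * WQ * (WQ⁻¹ * Wup) = Y * Wup := by
    rw [Matrix.mul_assoc Y, ← Matrix.mul_assoc WQ, hinv, Matrix.one_mul]
  rw [hup, Matrix.add_mul, Matrix.mul_assoc]
end

section
/- Let Block : ℝ^{n×d} → ℝ^{n×d} be a transformer block without layer normalization with skip connections around both its attention and MLP sublayers, Block(X) = Y + φ(Y·W_up)·W_down where Y = X + S_c(X, W_Q, W_K, W_V)·W_O, with W_Q ∈ GL(d), and consider the weight-shared L-layer transformer obtained by composing this same block L times. Then with Θ = W_Q, W̃_K = Θ⁻¹W_K, W̃_V = Θ⁻¹W_V, W̃_O = W_O·Θ, W̃_up = Θ⁻¹W_up, W̃_down = W_down·Θ, and B̃ the block built from query weight I_d and these weights, one has Block^{∘L}(X) = B̃^{∘L}(X·Θ)·Θ⁻¹ for all X ∈ ℝ^{n×d} and all L ≥ 1; hence the weight-shared transformer is functionally equivalent to a weight-shared transformer whose query weight is the identity, after absorbing Θ into the embedding and Θ⁻¹ into the LM head. -/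
open scoped Matrix

lemma block_conj {n h dk m : ℕ} (φ : ℝ → ℝ)
    (WQ WK WV WO : Matrix (Fin h × Fin dk) (Fin h × Fin dk) ℝ)
    (Wup : Matrix (Fin h × Fin dk) (Fin m) ℝ)
    (Wdown : Matrix (Fin m) (Fin h × Fin dk) ℝ)
    (hWQ : IsUnit WQ.det) (X : Matrix (Fin n) (Fin h × Fin dk) ℝ) :
    blockFn φ (1 : Matrix (Fin h × Fin dk) (Fin h × Fin dk) ℝ)
        (WQ⁻¹ * WK) (WQ⁻¹ * WV) (WO * WQ) (WQ⁻¹ * Wup) (Wdown * WQ) (X * WQ) =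
      blockFn φ WQ WK WV WO Wup Wdown X * WQ := by
  have hK : X * WQ * (WQ⁻¹ * WK) = X * WK := by
    rw [Matrix.mul_assoc X, ← Matrix.mul_assoc WQ, Matrix.mul_nonsing_inv _ hWQ,
      Matrix.one_mul]
  have hV : X * WQ * (WQ⁻¹ * WV) = X * WV := by
    rw [Matrix.mul_assoc X, ← Matrix.mul_assoc WQ, Matrix.mul_nonsing_inv _ hWQ,
      Matrix.one_mul]
  have hSc : Sc (X * WQ) 1 (WQ⁻¹ * WK) (WQ⁻¹ * WV) = Sc X WQ WK WV := by
    unfold Sc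
    rw [Matrix.mul_one, hK, hV]
  have hqUp : WQ * (WQ⁻¹ * Wup) = Wup := by
    rw [← Matrix.mul_assoc, Matrix.mul_nonsing_inv _ hWQ, Matrix.one_mul]
  simp only [blockFn, hSc, Matrix.add_mul, Matrix.mul_assoc, hqUp]

/-- **Weight-Shared Query Elimination.** For the weight-shared `L`-layer transformer
(`L ≥ 1`) obtained by composing the same block `L` times,
`Block^[L](X) = B̃^[L](X · Θ) · Θ⁻¹` with `Θ = W_Q`, where `B̃` is the reduced block with
query weight `I` and weights `Θ⁻¹W_K, Θ⁻¹W_V, W_O Θ, Θ⁻¹W_up, W_down Θ`. -/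
theorem weight_shared_query_elimination {n h dk m : ℕ} (φ : ℝ → ℝ)
    (WQ WK WV WO : Matrix (Fin h × Fin dk) (Fin h × Fin dk) ℝ)
    (Wup : Matrix (Fin h × Fin dk) (Fin m) ℝ)
    (Wdown : Matrix (Fin m) (Fin h × Fin dk) ℝ)
    (hWQ : IsUnit WQ.det) :
    ∀ (X : Matrix (Fin n) (Fin h × Fin dk) ℝ) (L : ℕ), 1 ≤ L →
      (blockFn φ WQ WK WV WO Wup Wdown)^[L] X =
        (blockFn φ (1 : Matrix (Fin h × Fin dk) (Fin h × Fin dk) ℝ)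
            (WQ⁻¹ * WK) (WQ⁻¹ * WV) (WO * WQ) (WQ⁻¹ * Wup) (Wdown * WQ))^[L] (X * WQ)
          * WQ⁻¹ := by
  intro X L _
  have key : ∀ (K : ℕ) (Z : Matrix (Fin n) (Fin h × Fin dk) ℝ),
      (blockFn φ (1 : Matrix (Fin h × Fin dk) (Fin h × Fin dk) ℝ)
          (WQ⁻¹ * WK) (WQ⁻¹ * WV) (WO * WQ) (WQ⁻¹ * Wup) (Wdown * WQ))^[K] (Z * WQ) =
        (blockFn φ WQ WK WV WO Wup Wdown)^[K] Z * WQ := by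
    intro K
    induction K with
    | zero => intro Z; rfl
    | succ K ih =>
        intro Z
        rw [Function.iterate_succ_apply, Function.iterate_succ_apply,
          block_conj φ WQ WK WV WO Wup Wdown hWQ Z, ih]
  rw [key L X, Matrix.mul_nonsing_inv_cancel_right _ _ hWQ]
end

section
/- The image of L_ε equals the open ball of the zero-mean hyperplane: Im(L_ε) = {z ∈ ℝ^d : Σ_{i=1}^d z_i = 0 and ‖z‖ < √d}, where ‖·‖ is the Euclidean norm. Moreover, for every z in this set, the vector c = sqrt(dε/(d − ‖z‖²))·z satisfies L_ε(c) = z, and c is the unique preimage of z with μ(c) = 0. -/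
/-- Mean of a vector: `μ(x) = (1/d) Σ_i x_i`. -/
noncomputable def mu {d : ℕ} (x : Fin d → ℝ) : ℝ := (∑ i, x i) / d

/-- Regularized standard deviation: `σ_ε(x) = sqrt((1/d) Σ_i (x_i − μ(x))² + ε)`. -/
noncomputable def sigmaEps {d : ℕ} (ε : ℝ) (x : Fin d → ℝ) : ℝ :=
  Real.sqrt ((∑ i, (x i - mu x) ^ 2) / d + ε)

/-- Regularized LayerNorm: `L_ε(x) = (x − μ(x)·1)/σ_ε(x)`. -/
noncomputable def Leps {d : ℕ} (ε : ℝ) (x : Fin d → ℝ) : Fin d → ℝ :=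
  fun i => (x i - mu x) / sigmaEps ε x

/-- Euclidean norm of a vector in `ℝ^d`. -/
noncomputable def vnorm {d : ℕ} (x : Fin d → ℝ) : ℝ := Real.sqrt (∑ i, x i ^ 2)

lemma sum_sub_mu {d : ℕ} (hd : 0 < d) (x : Fin d → ℝ) : ∑ i, (x i - mu x) = 0 := by
  have hdz : (d:ℝ) ≠ 0 := Nat.cast_ne_zero.mpr hd.ne'
  simp only [Finset.sum_sub_distrib, mu, Finset.sum_const, Finset.card_univ, Fintype.card_fin,
    nsmul_eq_mul]
  field_simp
  ring

lemma sigmaEps_arg_pos {d : ℕ} {ε : ℝ} (hε : 0 < ε) (x : Fin d → ℝ) :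
    0 < (∑ i, (x i - mu x) ^ 2) / d + ε := by
  have h0 : 0 ≤ (∑ i, (x i - mu x) ^ 2) := Finset.sum_nonneg fun i _ => sq_nonneg _
  have : 0 ≤ (∑ i, (x i - mu x) ^ 2) / d := by positivity
  linarith

lemma sigmaEps_pos {d : ℕ} {ε : ℝ} (hε : 0 < ε) (x : Fin d → ℝ) : 0 < sigmaEps ε x :=
  Real.sqrt_pos.mpr (sigmaEps_arg_pos hε x)

lemma sigmaEps_sq {d : ℕ} {ε : ℝ} (hε : 0 < ε) (x : Fin d → ℝ) :
    sigmaEps ε x ^ 2 = (∑ i, (x i - mu x) ^ 2) / d + ε :=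
  Real.sq_sqrt (sigmaEps_arg_pos hε x).le

/-- The image of `L_ε` is the open ball of radius `√d` in the zero-mean hyperplane, and each
`z` in it has the unique zero-mean preimage `c = sqrt(dε/(d − ‖z‖²)) · z`. -/
theorem Leps_range {d : ℕ} (hd : 0 < d) (ε : ℝ) (hε : 0 < ε) :
    Set.range (Leps (d := d) ε) =
        {z : Fin d → ℝ | (∑ i, z i) = 0 ∧ vnorm z < Real.sqrt d} ∧
    ∀ z : Fin d → ℝ, (∑ i, z i) = 0 → vnorm z < Real.sqrt d →
      Leps ε (Real.sqrt (d * ε / (d - vnorm z ^ 2)) • z) = z ∧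
      ∀ c' : Fin d → ℝ, Leps ε c' = z → mu c' = 0 →
        c' = Real.sqrt (d * ε / (d - vnorm z ^ 2)) • z := by
  have hdR : (0:ℝ) < d := Nat.cast_pos.mpr hd
  have hdz : (d:ℝ) ≠ 0 := hdR.ne'
  -- sum of Leps is zero
  have hsum : ∀ x : Fin d → ℝ, ∑ i, Leps ε x i = 0 := by
    intro x
    simp only [Leps]
    rw [← Finset.sum_div, sum_sub_mu hd x, zero_div]
  -- norm of Leps is < √d
  have hnorm : ∀ x : Fin d → ℝ, vnorm (Leps ε x) < Real.sqrt d := by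
    intro x
    set S := ∑ i, (x i - mu x) ^ 2 with hS
    have hS0 : 0 ≤ S := Finset.sum_nonneg fun i _ => sq_nonneg _
    have hσ2 : sigmaEps ε x ^ 2 = S / d + ε := sigmaEps_sq hε x
    have hσ2pos : 0 < S / d + ε := sigmaEps_arg_pos hε x
    have hsq : ∑ i, (Leps ε x i) ^ 2 = S / (S / d + ε) := by
      simp only [Leps, div_pow, ← Finset.sum_div, hσ2]
      rfl
    unfold vnorm
    rw [hsq]
    apply Real.sqrt_lt_sqrt (by positivity)
    rw [div_lt_iff₀ hσ2pos]
    have h1 : (d:ℝ) * (S / d + ε) = S + d * ε := by field_simp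
    rw [h1]
    nlinarith [mul_pos hdR hε]
  -- the main ∀ z part
  have key : ∀ z : Fin d → ℝ, (∑ i, z i) = 0 → vnorm z < Real.sqrt d →
      Leps ε (Real.sqrt (d * ε / (d - vnorm z ^ 2)) • z) = z ∧
      ∀ c' : Fin d → ℝ, Leps ε c' = z → mu c' = 0 →
        c' = Real.sqrt (d * ε / (d - vnorm z ^ 2)) • z := by
    intro z hz hzn
    set N := ∑ i, z i ^ 2 with hN
    have hN0 : 0 ≤ N := Finset.sum_nonneg fun i _ => sq_nonneg _
    have hvz : vnorm z ^ 2 = N := Real.sq_sqrt hN0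
    have hvz0 : 0 ≤ vnorm z := Real.sqrt_nonneg _
    have hNd : N < d := by
      have := pow_lt_pow_left₀ hzn hvz0 (n := 2) (by norm_num)
      rwa [hvz, Real.sq_sqrt hdR.le] at this
    have hdN : (0:ℝ) < d - N := by linarith
    set t := Real.sqrt ((d:ℝ) * ε / (d - vnorm z ^ 2)) with ht
    have htarg : (0:ℝ) < (d:ℝ) * ε / (d - vnorm z ^ 2) := by
      rw [hvz]; positivity
    have htpos : 0 < t := Real.sqrt_pos.mpr htarg
    have ht2 : t ^ 2 = (d:ℝ) * ε / (d - N) := by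
      rw [ht, Real.sq_sqrt htarg.le, hvz]
    -- mean of t • z is zero
    have hmu : mu (t • z) = 0 := by
      simp only [mu, Pi.smul_apply, smul_eq_mul, ← Finset.mul_sum, hz, mul_zero, zero_div]
    -- sigmaEps of t • z equals t
    have hsig : sigmaEps ε (t • z) = t := by
      have harg : (∑ i, ((t • z) i - mu (t • z)) ^ 2) / d + ε = t ^ 2 := by
        simp only [hmu, sub_zero, Pi.smul_apply, smul_eq_mul, mul_pow, ← Finset.mul_sum, ← hN]
        rw [ht2]
        field_simp
        ring
      rw [sigmaEps, harg, Real.sqrt_sq htpos.le]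
    constructor
    · funext i
      simp only [Leps, hsig, hmu, sub_zero, Pi.smul_apply, smul_eq_mul]
      field_simp
    · intro c' hc' hmuc
      have hs := sigmaEps_pos (d := d) hε c'
      set s := sigmaEps ε c' with hsdef
      have hci : ∀ i, c' i = s * z i := by
        intro i
        have := congrFun hc' i
        simp only [Leps, hmuc, sub_zero] at this
        rw [← this]; field_simp
        exact (mul_div_cancel_right₀ _ hs.ne').symm
      have hsumsq : ∑ i, (c' i - mu c') ^ 2 = s ^ 2 * N := by
        simp only [hmuc, sub_zero]
        rw [hN, Finset.mul_sum]
        exact Finset.sum_congr rfl fun i _ => by rw [hci i]; ring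
      have hs2 : s ^ 2 = s ^ 2 * N / d + ε := by
        rw [← hsumsq, ← sigmaEps_sq hε c']
      have hs2t2 : s ^ 2 = t ^ 2 := by
        rw [ht2]
        field_simp at hs2 ⊢
        nlinarith
      have hst : s = t := by
        have := congrArg Real.sqrt hs2t2
        rwa [Real.sqrt_sq hs.le, Real.sqrt_sq htpos.le] at this
      funext i
      simp only [Pi.smul_apply, smul_eq_mul]
      rw [hci i, hst]
  refine ⟨?_, key⟩
  ext z
  constructor
  · rintro ⟨x, rfl⟩
    exact ⟨hsum x, hnorm x⟩
  · rintro ⟨h1, h2⟩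
    exact ⟨_, (key z h1 h2).1⟩
end

section
/- Let h ≥ 1, m ≥ 1, W_1 ∈ ℝ^{m×h}, W_2 ∈ ℝ^{h×m}, and suppose J ⊆ {1,…,m} satisfies W_2·Π·W_1 = −I_h, where Π = diag(1_J) is the diagonal 0/1 projector onto the coordinates in J. Set D = I_m − 2Π (a diagonal ±1 matrix), V_1 = D·W_1, and V_2 = W_2. Then W_2·ReLU(W_1 x) + x = V_2·ReLU(V_1 x) for all x ∈ ℝ^h. -/
/-- Coordinatewise ReLU on `ℝ^m`. -/
def reluV {m : ℕ} (y : Fin m → ℝ) : Fin m → ℝ := fun i => max (y i) 0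

/-- **Sufficiency.** If `W_2 Π W_1 = −I_h` for the projector `Π = diag(1_J)` onto `J`,
then with `D = I − 2Π`, `V_1 = D W_1` and `V_2 = W_2`,
`W_2·ReLU(W_1 x) + x = V_2·ReLU(V_1 x)` for all `x`. -/
theorem skip_absorption_sufficiency {h m : ℕ} (hh : 1 ≤ h) (hm : 1 ≤ m)
    (W1 : Matrix (Fin m) (Fin h) ℝ) (W2 : Matrix (Fin h) (Fin m) ℝ)
    (J : Finset (Fin m))
    (hJ : W2 * Matrix.diagonal (fun i => if i ∈ J then (1 : ℝ) else 0) * W1 =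
        -(1 : Matrix (Fin h) (Fin h) ℝ)) :
    ∀ x : Fin h → ℝ,
      W2.mulVec (reluV (W1.mulVec x)) + x =
        W2.mulVec (reluV
          ((((1 : Matrix (Fin m) (Fin m) ℝ) -
              (2 : ℝ) • Matrix.diagonal (fun i => if i ∈ J then (1 : ℝ) else 0)) * W1).mulVec
            x)) := by
  intro x
  set χ : Fin m → ℝ := fun i => if i ∈ J then (1 : ℝ) else 0 with hχ
  set y : Fin m → ℝ := W1.mulVec x with hy
  have habs : ∀ a : ℝ, max (-a) 0 = max a 0 - a := by
    intro a; rcases le_total a 0 with h0 | h0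
    · rw [max_eq_left (by linarith), max_eq_right h0]; ring
    · rw [max_eq_right (by linarith), max_eq_left h0]; ring
  have key : reluV ((((1 : Matrix (Fin m) (Fin m) ℝ) -
      (2 : ℝ) • Matrix.diagonal χ) * W1).mulVec x)
      = reluV y - (Matrix.diagonal χ).mulVec y := by
    funext i
    have hD : (((1 : Matrix (Fin m) (Fin m) ℝ) -
        (2 : ℝ) • Matrix.diagonal χ) * W1).mulVec x i
        = (1 - 2 * χ i) * y i := by
      rw [← Matrix.mulVec_mulVec]
      simp [Matrix.sub_mulVec, Matrix.mulVec_diagonal, Matrix.smul_mulVec, ← hy]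
      ring
    simp only [reluV, Pi.sub_apply, Matrix.mulVec_diagonal, hD]
    by_cases hi : i ∈ J
    · simp only [hχ, hi, if_true]
      rw [show (1 - 2 * (1:ℝ)) * y i = -(y i) by ring, habs]; ring
    · simp [hχ, hi]
  rw [key, Matrix.mulVec_sub, Matrix.mulVec_mulVec, hy, Matrix.mulVec_mulVec, hJ]
  simp [Matrix.neg_mulVec, sub_eq_add_neg]
end

section
/- Let h ≥ 1, m ≥ 1, W_1, V_1 ∈ ℝ^{m×h}, and W_2, V_2 ∈ ℝ^{h×m}. If W_2·ReLU(W_1 x) + x = V_2·ReLU(V_1 x) for all x ∈ ℝ^h, then V_2·V_1 = W_2·W_1 + 2I_h, and V_2·|V_1 x| = W_2·|W_1 x| for all x ∈ ℝ^h, where |·| denotes the coordinatewise absolute value on ℝ^m. -/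
/-- Coordinatewise absolute value on `ℝ^m`. -/
def absV {m : ℕ} (y : Fin m → ℝ) : Fin m → ℝ := fun i => |y i|

lemma reluV_eq {m : ℕ} (y : Fin m → ℝ) : reluV y = (2:ℝ)⁻¹ • (y + absV y) := by
  funext i
  simp only [reluV, absV, Pi.smul_apply, Pi.add_apply, smul_eq_mul]
  rcases le_total (y i) 0 with hy | hy
  · rw [max_eq_right hy, abs_of_nonpos hy]; ring
  · rw [max_eq_left hy, abs_of_nonneg hy]; ring

lemma absV_neg {m h : ℕ} (M : Matrix (Fin m) (Fin h) ℝ) (x : Fin h → ℝ) :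
    absV (M.mulVec (-x)) = absV (M.mulVec x) := by
  funext i
  simp [absV, Matrix.mulVec_neg]

/-- **Necessity.** If `W_2·ReLU(W_1 x) + x = V_2·ReLU(V_1 x)` for all `x`, then
`V_2 V_1 = W_2 W_1 + 2 I_h` and `V_2·|V_1 x| = W_2·|W_1 x|` for all `x`. -/
theorem skip_absorption_necessity {h m : ℕ} (hh : 1 ≤ h) (hm : 1 ≤ m)
    (W1 V1 : Matrix (Fin m) (Fin h) ℝ) (W2 V2 : Matrix (Fin h) (Fin m) ℝ)
    (heq : ∀ x : Fin h → ℝ,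
        W2.mulVec (reluV (W1.mulVec x)) + x = V2.mulVec (reluV (V1.mulVec x))) :
    V2 * V1 = W2 * W1 + (2 : ℝ) • (1 : Matrix (Fin h) (Fin h) ℝ) ∧
    ∀ x : Fin h → ℝ, V2.mulVec (absV (V1.mulVec x)) = W2.mulVec (absV (W1.mulVec x)) := by
  -- key equation: odd part = even part
  have key : ∀ x : Fin h → ℝ,
      V2.mulVec (V1.mulVec x) - W2.mulVec (W1.mulVec x) - (2:ℝ) • x
        = W2.mulVec (absV (W1.mulVec x)) - V2.mulVec (absV (V1.mulVec x)) := by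
    intro x
    have := heq x
    rw [reluV_eq, reluV_eq, Matrix.mulVec_smul, Matrix.mulVec_add,
      Matrix.mulVec_smul, Matrix.mulVec_add] at this
    funext i
    have := congrFun this i
    simp only [Pi.add_apply, Pi.smul_apply, Pi.sub_apply, smul_eq_mul] at this ⊢
    linarith
  -- odd part vanishes
  have lin : ∀ x : Fin h → ℝ,
      V2.mulVec (V1.mulVec x) - W2.mulVec (W1.mulVec x) - (2:ℝ) • x = 0 := by
    intro x
    have h1 := key x
    have h2 := key (-x)
    rw [absV_neg, absV_neg, Matrix.mulVec_neg, Matrix.mulVec_neg,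
      Matrix.mulVec_neg, Matrix.mulVec_neg] at h2
    funext i
    have e1 := congrFun h1 i
    have e2 := congrFun h2 i
    simp only [Pi.sub_apply, Pi.neg_apply, Pi.smul_apply, Pi.zero_apply, smul_eq_mul,
      smul_neg] at e1 e2 ⊢
    linarith
  constructor
  · ext i j
    have := congrFun (lin (Pi.single j 1)) i
    simp only [Matrix.mulVec_single, Pi.sub_apply, Pi.smul_apply, Pi.single_apply,
      smul_eq_mul, Pi.zero_apply, Matrix.add_apply, Matrix.smul_apply, Matrix.one_apply,
      Matrix.mul_apply, Matrix.mulVec, dotProduct, mul_one] at this ⊢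
    rcases eq_or_ne i j with rfl | hij <;> simp_all <;> linarith
  · intro x
    have h1 := key x
    have h2 := lin x
    rw [h2] at h1
    have := h1.symm
    funext i
    have := congrFun this i
    simp only [Pi.sub_apply, Pi.zero_apply] at this
    linarith
end
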